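/- Let L be a frame, P a sub-pcd-lattice of L that is a basis of L, and ⊲ a strong inclusion on P compatible with L. Then there exist a compact regular frame M and a dense surjective frame homomorphism μ : M → L such that for every compact regular frame L' and every frame homomorphism f : L' → L with ⊲ finer than f (i.e. for all x, y ∈ L' with y ≺ x there exist p, p' ∈ P with f y ≤ p, p ⊲ p' and p' ≤ f x), there exists a unique frame homomorphism g : L' → M with f = μ ∘ g. -/

import Mathlib

/-- The well-inside relation of a frame: `b` is well inside `a` iff `bᶜ ⊔ a = ⊤`. -/
def WellInside {L : Type*} [Order.Frame L] (b a : L) : Prop := bᶜ ⊔ a = ⊤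

/-- A frame is regular if every element is the join of the elements well inside it. -/
def IsRegularFrame (L : Type*) [Order.Frame L] : Prop :=
  ∀ a : L, a = sSup {b | WellInside b a}

/-- A frame is compact if `⊤` is a compact element. -/
def IsCompactFrame (L : Type*) [Order.Frame L] : Prop :=
  ∀ S : Set L, ⊤ ≤ sSup S → ∃ T : Set L, T ⊆ S ∧ T.Finite ∧ ⊤ ≤ sSup T

/-- A subset `P` of a frame `L` is a basis if every element of `L` is the join
of the elements of `P` below it. -/
def IsBasis {L : Type*} [Order.Frame L] (P : Set L) : Prop :=
  ∀ a : L, a = sSup {p | p ∈ P ∧ p ≤ a}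

/-- A sub-pcd-lattice of a frame `L`: a subset containing `⊥` and `⊤`, closed
under binary meets, binary joins and pseudocomplements (computed in `L`). -/
def IsSubPcdLattice {L : Type*} [Order.Frame L] (P : Set L) : Prop :=
  ⊥ ∈ P ∧ ⊤ ∈ P ∧ (∀ x ∈ P, ∀ y ∈ P, x ⊓ y ∈ P) ∧
    (∀ x ∈ P, ∀ y ∈ P, x ⊔ y ∈ P) ∧ (∀ x ∈ P, xᶜ ∈ P)

/-- A strong inclusion on a sub-pcd-lattice `P` of a frame `L`:
conditions (1)–(7) of Banaschewski. -/
def IsStrongInclusion {L : Type*} [Order.Frame L] (P : Set L) (r : L → L → Prop) : Prop :=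
  (r ⊥ ⊥ ∧ r ⊤ ⊤) ∧
  (∀ x a b y, x ∈ P → y ∈ P → x ≤ a → r a b → b ≤ y → r x y) ∧
  (∀ x a b, r x a → r x b → r x (a ⊓ b)) ∧
  (∀ x y a, r x a → r y a → r (x ⊔ y) a) ∧
  (∀ a b, r a b → r bᶜ aᶜ) ∧
  (∀ a b, r a b → WellInside a b) ∧
  (∀ a b, r a b → ∃ z ∈ P, r a z ∧ r z b)

universe u

namespace BanAux

variable {α : Type*} [Order.Frame α]

theorem wi_le {b a : α} (h : WellInside b a) : b ≤ a := by
  have h1 : b = b ⊓ (bᶜ ⊔ a) := by rw [h, inf_top_eq]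
  calc b = b ⊓ (bᶜ ⊔ a) := h1
    _ = (b ⊓ bᶜ) ⊔ (b ⊓ a) := inf_sup_left b bᶜ a
    _ ≤ a := by rw [inf_compl_self]; simp

theorem wi_bot (a : α) : WellInside ⊥ a := by simp [WellInside]

theorem wi_top : WellInside (⊤ : α) ⊤ := by simp [WellInside]

theorem wi_mono {b' b a a' : α} (hb : b' ≤ b) (h : WellInside b a) (ha : a ≤ a') :
    WellInside b' a' :=
  eq_top_iff.mpr (le_trans h.ge (sup_le_sup (compl_anti hb) ha))

theorem wi_sup {b₁ b₂ a : α} (h₁ : WellInside b₁ a) (h₂ : WellInside b₂ a) :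
    WellInside (b₁ ⊔ b₂) a := by
  refine eq_top_iff.mpr ?_
  rw [compl_sup, sup_comm, sup_inf_left]
  exact le_inf (by rw [sup_comm]; exact h₁.ge) (by rw [sup_comm]; exact h₂.ge)

theorem wi_inf {y₁ x₁ y₂ x₂ : α} (h₁ : WellInside y₁ x₁) (h₂ : WellInside y₂ x₂) :
    WellInside (y₁ ⊓ y₂) (x₁ ⊓ x₂) := by
  refine eq_top_iff.mpr ?_
  rw [sup_inf_left]
  refine le_inf ?_ ?_
  · exact le_trans h₁.ge (sup_le_sup (compl_anti inf_le_left) le_rfl)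
  · exact le_trans h₂.ge (sup_le_sup (compl_anti inf_le_right) le_rfl)

theorem exists_top_of_directed (hc : IsCompactFrame α) {S : Set α} (hne : S.Nonempty)
    (hdir : ∀ a ∈ S, ∀ b ∈ S, a ⊔ b ∈ S) (h : ⊤ ≤ sSup S) : ∃ s ∈ S, ⊤ ≤ s := by
  obtain ⟨T, hTS, hTfin, hTtop⟩ := hc S h
  have key : ∀ T' : Set α, T'.Finite → T' ⊆ S → ∃ u ∈ S, ∀ t ∈ T', t ≤ u := by
    intro T' hfin
    refine Set.Finite.induction_on (motive := fun T' _ => T' ⊆ S → ∃ u ∈ S, ∀ t ∈ T', t ≤ u) T' hfin ?_ ?_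
    · intro _; obtain ⟨s, hs⟩ := hne; exact ⟨s, hs, by simp⟩
    · intro a T'' _ _ ih hins
      obtain ⟨u, hu, hle⟩ := ih (fun x hx => hins (Set.mem_insert_of_mem _ hx))
      refine ⟨a ⊔ u, hdir _ (hins (Set.mem_insert _ _)) _ hu, ?_⟩
      rintro t (rfl | ht)
      · exact le_sup_left
      · exact (hle t ht).trans le_sup_right
  obtain ⟨u, hu, hle⟩ := key T hTfin hTS
  exact ⟨u, hu, hTtop.trans (sSup_le hle)⟩

/-- find a single member of a join-closed family that `y` is well inside of -/
theorem wi_find (hc : IsCompactFrame α) {y : α} {W : Set α} (hne : W.Nonempty)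
    (hdir : ∀ a ∈ W, ∀ b ∈ W, a ⊔ b ∈ W) (h : ⊤ ≤ yᶜ ⊔ sSup W) :
    ∃ w ∈ W, WellInside y w := by
  set U := {v | ∃ w ∈ W, v = yᶜ ⊔ w} with hU
  have hUne : U.Nonempty := ⟨yᶜ ⊔ hne.choose, hne.choose, hne.choose_spec, rfl⟩
  have hUdir : ∀ a ∈ U, ∀ b ∈ U, a ⊔ b ∈ U := by
    rintro _ ⟨w₁, hw₁, rfl⟩ _ ⟨w₂, hw₂, rfl⟩
    exact ⟨w₁ ⊔ w₂, hdir _ hw₁ _ hw₂, by rw [sup_sup_sup_comm, sup_idem]⟩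
  have hsup : ⊤ ≤ sSup U := by
    refine h.trans (sup_le ?_ ?_)
    · exact le_trans le_sup_left (le_sSup ⟨hne.choose, hne.choose_spec, rfl⟩)
    · exact sSup_le fun w hw => le_trans le_sup_right (le_sSup ⟨w, hw, rfl⟩)
  obtain ⟨_, ⟨w, hw, rfl⟩, htop⟩ := exists_top_of_directed hc hUne hUdir hsup
  exact ⟨w, hw, top_unique htop⟩

theorem wi_interp (hc : IsCompactFrame α) (hreg : IsRegularFrame α) {y x : α}
    (h : WellInside y x) : ∃ z, WellInside y z ∧ WellInside z x := by
  have := wi_find hc (W := {z | WellInside z x}) ⟨⊥, wi_bot x⟩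
    (fun a ha b hb => wi_sup ha hb)
    (by rw [← hreg x, h])
  obtain ⟨z, hz, hyz⟩ := this
  exact ⟨z, hyz, hz⟩

theorem wi_sSup_split (hc : IsCompactFrame α) (hreg : IsRegularFrame α) {y : α} {S : Set α}
    (h : WellInside y (sSup S)) :
    ∃ F : Finset α, (∀ u ∈ F, ∃ x ∈ S, WellInside u x) ∧ y ≤ F.sup id := by
  classical
  set W := {w | ∃ F : Finset α, (∀ u ∈ F, ∃ x ∈ S, WellInside u x) ∧ w = F.sup id} with hW
  have hWne : W.Nonempty := ⟨⊥, ∅, by simp, by simp⟩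
  have hWdir : ∀ a ∈ W, ∀ b ∈ W, a ⊔ b ∈ W := by
    rintro _ ⟨F₁, h₁, rfl⟩ _ ⟨F₂, h₂, rfl⟩
    refine ⟨F₁ ∪ F₂, ?_, by rw [Finset.sup_union]⟩
    intro u hu
    rcases Finset.mem_union.1 hu with hu | hu
    exacts [h₁ u hu, h₂ u hu]
  have hle : sSup S ≤ sSup W := by
    refine sSup_le fun x hx => ?_
    conv_lhs => rw [hreg x]
    refine sSup_le fun u hu => le_sSup ⟨{u}, ?_, by simp⟩
    intro v hv
    rw [Finset.mem_singleton] at hv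
    exact ⟨x, hx, hv ▸ hu⟩
  obtain ⟨w, ⟨F, hF, rfl⟩, hyw⟩ := wi_find hc hWne hWdir
    (by calc (⊤:α) = yᶜ ⊔ sSup S := h.symm
          _ ≤ yᶜ ⊔ sSup W := sup_le_sup_left hle _)
  exact ⟨F, hF, wi_le hyw⟩

end BanAux

namespace BanAux

section RIdSec

variable {L : Type u} [Order.Frame L]

/-- Strongly regular ideals of the sub-pcd-lattice `P` w.r.t. the strong inclusion `r`. -/
structure RId (P : Set L) (r : L → L → Prop)
    (hP : IsSubPcdLattice P) (hr : IsStrongInclusion P r) : Type u where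
  car : Set L
  sub : car ⊆ P
  bot_mem : ⊥ ∈ car
  down : ∀ ⦃x⦄, x ∈ P → ∀ ⦃y⦄, y ∈ car → x ≤ y → x ∈ car
  supc : ∀ ⦃x⦄, x ∈ car → ∀ ⦃y⦄, y ∈ car → x ⊔ y ∈ car
  round : ∀ ⦃a⦄, a ∈ car → ∃ b ∈ car, r a b

variable {P : Set L} {r : L → L → Prop} {hP : IsSubPcdLattice P} {hr : IsStrongInclusion P r}

set_option linter.unusedSectionVars false

theorem RId.ext' {J K : RId P r hP hr} (h : J.car = K.car) : J = K := by
  cases J; cases K; cases h; rfl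

include hr

theorem rmono {x a b y : L} (hx : x ∈ P) (hy : y ∈ P) (h1 : x ≤ a) (h2 : r a b)
    (h3 : b ≤ y) : r x y := hr.2.1 x a b y hx hy h1 h2 h3

theorem rinf {x a b : L} (h1 : r x a) (h2 : r x b) : r x (a ⊓ b) := hr.2.2.1 x a b h1 h2

theorem rsup {x y a : L} (h1 : r x a) (h2 : r y a) : r (x ⊔ y) a := hr.2.2.2.1 x y a h1 h2

theorem rcompl {a b : L} (h : r a b) : r bᶜ aᶜ := hr.2.2.2.2.1 a b h

theorem rwi {a b : L} (h : r a b) : WellInside a b := hr.2.2.2.2.2.1 a b h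

theorem rinterp {a b : L} (h : r a b) : ∃ z ∈ P, r a z ∧ r z b := hr.2.2.2.2.2.2 a b h

theorem rle {a b : L} (h : r a b) : a ≤ b := wi_le (rwi (hr := hr) h)

theorem r_top (hP : IsSubPcdLattice P) {a : L} (ha : a ∈ P) : r a ⊤ :=
  rmono (hr := hr) ha hP.2.1 le_top hr.1.2 le_rfl

theorem r_bot (hP : IsSubPcdLattice P) {a : L} (ha : a ∈ P) : r ⊥ a :=
  rmono (hr := hr) hP.1 ha le_rfl hr.1.1 bot_le

omit hr in
theorem finsup_mem_P (hP : IsSubPcdLattice P) {F : Finset L} (h : ∀ q ∈ F, q ∈ P) :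
    F.sup id ∈ P := by
  induction F using Finset.cons_induction with
  | empty => simpa using hP.1
  | cons a F ha ih =>
      rw [Finset.sup_cons]
      exact hP.2.2.2.1 _ (h a (Finset.mem_cons_self a F)) _
        (ih fun q hq => h q (Finset.mem_cons_of_mem hq))

theorem finsup_mem_car {J : RId P r hP hr} {F : Finset L} (h : ∀ q ∈ F, q ∈ J.car) :
    F.sup id ∈ J.car := by
  induction F using Finset.cons_induction with
  | empty => simpa using J.bot_mem
  | cons a F ha ih =>
      rw [Finset.sup_cons]
      exact J.supc (h a (Finset.mem_cons_self a F))
        (ih fun q hq => h q (Finset.mem_cons_of_mem hq))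

/-- the carrier of the join of a family of strongly regular ideals -/
def genC (S : Set (RId P r hP hr)) : Set L :=
  {x | x ∈ P ∧ ∃ F : Finset L, (∀ q ∈ F, ∃ J ∈ S, q ∈ J.car) ∧ x ≤ F.sup id}

theorem genC_round (S : Set (RId P r hP hr)) :
    ∀ F : Finset L, (∀ q ∈ F, ∃ J ∈ S, q ∈ J.car) →
      ∃ F' : Finset L, (∀ q ∈ F', ∃ J ∈ S, q ∈ J.car) ∧ r (F.sup id) (F'.sup id) := by
  intro F
  induction F using Finset.cons_induction with
  | empty => exact fun _ => ⟨∅, by simp, by simpa using hr.1.1⟩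
  | cons a F ha ih =>
      intro h
      obtain ⟨J, hJ, haJ⟩ := h a (Finset.mem_cons_self a F)
      obtain ⟨b, hbJ, hab⟩ := J.round haJ
      obtain ⟨F', hF', hrF⟩ := ih fun q hq => h q (Finset.mem_cons_of_mem hq)
      classical
      have hmem : ∀ q ∈ insert b F', ∃ K ∈ S, q ∈ K.car := by
        intro q hq
        rcases Finset.mem_insert.1 hq with rfl | hq
        · exact ⟨J, hJ, hbJ⟩
        · exact hF' q hq
      have hFP' : F'.sup id ∈ P := finsup_mem_P hP fun q hq => by
        obtain ⟨K, _, hqK⟩ := hF' q hq; exact K.sub hqK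
      have hFP0 : F.sup id ∈ P := finsup_mem_P hP fun q hq => by
        obtain ⟨K, _, hqK⟩ := h q (Finset.mem_cons_of_mem hq); exact K.sub hqK
      have hbP : b ∈ P := J.sub hbJ
      have hbs : id b ⊔ F'.sup id ∈ P := hP.2.2.2.1 _ hbP _ hFP'
      refine ⟨insert b F', hmem, ?_⟩
      rw [Finset.sup_cons, Finset.sup_insert]
      refine rsup (hr := hr) ?_ ?_
      · exact rmono (hr := hr) (J.sub haJ) hbs (le_of_eq (id_eq a)) hab le_sup_left
      · exact rmono (hr := hr) hFP0 hbs le_rfl hrF le_sup_right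

/-- the join of a family of strongly regular ideals -/
noncomputable def genI (S : Set (RId P r hP hr)) : RId P r hP hr where
  car := genC S
  sub := fun _ hx => hx.1
  bot_mem := ⟨hP.1, ∅, by simp, by simp⟩
  down := fun x hxP y hy hxy => ⟨hxP, hy.2.choose, hy.2.choose_spec.1,
    hxy.trans hy.2.choose_spec.2⟩
  supc := by
    classical
    rintro x ⟨hxP, F₁, h₁, hx⟩ y ⟨hyP, F₂, h₂, hy⟩
    refine ⟨hP.2.2.2.1 _ hxP _ hyP, F₁ ∪ F₂, ?_, ?_⟩
    · intro q hq
      rcases Finset.mem_union.1 hq with hq | hq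
      exacts [h₁ q hq, h₂ q hq]
    · exact sup_le (hx.trans (Finset.sup_mono Finset.subset_union_left))
        (hy.trans (Finset.sup_mono Finset.subset_union_right))
  round := by
    rintro x ⟨hxP, F, hF, hx⟩
    obtain ⟨F', hF', hrF⟩ := genC_round (hr := hr) S F hF
    have hsP : F'.sup id ∈ P := finsup_mem_P hP fun q hq =>
      (hF' q hq).choose.sub (hF' q hq).choose_spec.2
    exact ⟨F'.sup id, ⟨hsP, F', hF', le_rfl⟩,
      rmono (hr := hr) hxP hsP hx hrF le_rfl⟩

instance : PartialOrder (RId P r hP hr) where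
  le J K := J.car ⊆ K.car
  le_refl _ := subset_rfl
  le_trans _ _ _ h h' := Set.Subset.trans h h'
  le_antisymm _ _ h h' := RId.ext' (subset_antisymm h h')

theorem le_def {J K : RId P r hP hr} : J ≤ K ↔ J.car ⊆ K.car := Iff.rfl

noncomputable instance : SupSet (RId P r hP hr) := ⟨genI⟩

theorem genI_isLUB (S : Set (RId P r hP hr)) : IsLUB S (genI S) := by
  constructor
  · intro J hJ q hq
    refine ⟨J.sub hq, {q}, ?_, by simp⟩
    intro v hv
    rw [Finset.mem_singleton] at hv
    exact ⟨J, hJ, hv ▸ hq⟩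
  · rintro K hK x ⟨hxP, F, hF, hx⟩
    refine K.down hxP (finsup_mem_car (hr := hr) fun q hq => ?_) hx
    obtain ⟨J, hJ, hqJ⟩ := hF q hq
    exact hK hJ hqJ

noncomputable instance : CompleteLattice (RId P r hP hr) :=
  completeLatticeOfSup _ genI_isLUB

theorem sSup_eq_genI (S : Set (RId P r hP hr)) : sSup S = genI S := rfl

noncomputable def interI (J K : RId P r hP hr) : RId P r hP hr where
  car := J.car ∩ K.car
  sub := fun x hx => J.sub hx.1
  bot_mem := ⟨J.bot_mem, K.bot_mem⟩
  down := fun x hxP y hy hxy => ⟨J.down hxP hy.1 hxy, K.down hxP hy.2 hxy⟩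
  supc := fun x hx y hy => ⟨J.supc hx.1 hy.1, K.supc hx.2 hy.2⟩
  round := by
    rintro a ⟨haJ, haK⟩
    obtain ⟨b, hbJ, hab⟩ := J.round haJ
    obtain ⟨c, hcK, hac⟩ := K.round haK
    have hbcP : b ⊓ c ∈ P := hP.2.2.1 _ (J.sub hbJ) _ (K.sub hcK)
    exact ⟨b ⊓ c, ⟨J.down hbcP hbJ inf_le_left, K.down hbcP hcK inf_le_right⟩,
      rinf (hr := hr) hab hac⟩

end RIdSec
end BanAux

namespace BanAux
section RIdSec2

variable {L : Type u} [Order.Frame L]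
variable {P : Set L} {r : L → L → Prop} {hP : IsSubPcdLattice P} {hr : IsStrongInclusion P r}

set_option linter.unusedSectionVars false

/-- the improper ideal -/
noncomputable def PI : RId P r hP hr where
  car := P
  sub := subset_rfl
  bot_mem := hP.1
  down := fun x hx _ _ _ => hx
  supc := fun x hx y hy => hP.2.2.2.1 x hx y hy
  round := fun a ha => ⟨⊤, hP.2.1, r_top (hr := hr) hP ha⟩

/-- the zero ideal -/
noncomputable def BI : RId P r hP hr where
  car := {x | x = ⊥}
  sub := fun x hx => hx ▸ hP.1
  bot_mem := rfl
  down := fun x _ y hy hxy => le_bot_iff.1 (hy ▸ hxy)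
  supc := fun x hx y hy => by simp [Set.mem_setOf_eq] at hx hy ⊢; simp [hx, hy]
  round := fun a ha => ⟨⊥, rfl, ha ▸ hr.1.1⟩

theorem BI_le (K : RId P r hP hr) : BI ≤ K := fun x hx => hx ▸ K.bot_mem

theorem le_PI (K : RId P r hP hr) : K ≤ PI := K.sub

noncomputable instance : Order.Frame (RId P r hP hr) :=
  Order.Frame.ofMinimalAxioms
  { inf_sSup_le_iSup_inf := by
      intro J S
      refine le_def.2 fun x hx => ?_
      have hx1 : x ∈ J.car := le_def.1 inf_le_left hx
      have hx2 : x ∈ genC S := le_def.1 inf_le_right hx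
      obtain ⟨hxP, F, hF, hxle⟩ := hx2
      classical
      have hgen : x ∈ genC ((fun K => J ⊓ K) '' S) := by
        refine ⟨hxP, F.image (fun q => x ⊓ q), ?_, ?_⟩
        · intro v hv
          obtain ⟨q, hq, rfl⟩ := Finset.mem_image.1 hv
          obtain ⟨K, hK, hqK⟩ := hF q hq
          refine ⟨J ⊓ K, ⟨K, hK, rfl⟩, ?_⟩
          have hmem : x ⊓ q ∈ (interI J K).car :=
            ⟨J.down (hP.2.2.1 _ hxP _ (K.sub hqK)) hx1 inf_le_left,
             K.down (hP.2.2.1 _ hxP _ (K.sub hqK)) hqK inf_le_right⟩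
          exact le_def.1 (le_inf (fun y hy => hy.1 : interI J K ≤ J)
            (fun y hy => hy.2 : interI J K ≤ K)) hmem
        · have h1 : x ≤ x ⊓ F.sup id := le_inf le_rfl hxle
          have h2 : x ⊓ F.sup id = F.sup fun q => x ⊓ id q :=
            Finset.sup_inf_distrib_left F id x
          have h3 : (F.image (fun q => x ⊓ q)).sup id = F.sup fun q => x ⊓ q :=
            Finset.sup_image F (fun q => x ⊓ q) id
          rw [h3]
          exact h1.trans (le_of_eq h2)
      have hle : sSup ((fun K => J ⊓ K) '' S) ≤ ⨆ K ∈ S, J ⊓ K := by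
        refine sSup_le ?_
        rintro _ ⟨K, hK, rfl⟩
        exact le_iSup_of_le K (le_iSup_of_le hK le_rfl)
      exact le_def.1 hle hgen }

theorem mem_sSup {S : Set (RId P r hP hr)} {x : L} : x ∈ (sSup S).car ↔ x ∈ genC S := Iff.rfl

theorem inf_car (J K : RId P r hP hr) : (J ⊓ K).car = J.car ∩ K.car :=
  subset_antisymm
    (Set.subset_inter (le_def.1 inf_le_left) (le_def.1 inf_le_right))
    (le_def.1 (le_inf (fun y hy => hy.1 : interI J K ≤ J)
      (fun y hy => hy.2 : interI J K ≤ K)))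

theorem top_car : (⊤ : RId P r hP hr).car = P :=
  subset_antisymm (RId.sub _) (le_def.1 (le_top (a := PI)))

theorem bot_car : (⊥ : RId P r hP hr).car = {x | x = ⊥} :=
  subset_antisymm (le_def.1 (bot_le (a := BI))) (le_def.1 (BI_le _))

theorem eq_top_of_top_mem {J : RId P r hP hr} (h : ⊤ ∈ J.car) : J = ⊤ :=
  top_unique (le_def.2 (by rw [top_car]; exact fun p hp => J.down hp h le_top))

theorem eq_bot_of_forall {J : RId P r hP hr} (h : ∀ x ∈ J.car, x = ⊥) : J = ⊥ :=
  le_bot_iff.1 (le_def.2 (by rw [bot_car]; exact fun x hx => h x hx))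

theorem compact_RId : IsCompactFrame (RId P r hP hr) := by
  classical
  intro S hS
  have htop : ⊤ ∈ (sSup S).car := le_def.1 hS (by rw [top_car]; exact hP.2.1)
  obtain ⟨-, F, hF, hle⟩ := mem_sSup.1 htop
  choose K hKS hK using fun q (hq : q ∈ F) => hF q hq
  refine ⟨{J | ∃ q, ∃ hq : q ∈ F, J = K q hq}, ?_, ?_, ?_⟩
  · rintro _ ⟨q, hq, rfl⟩; exact hKS q hq
  · have : Finite {q // q ∈ F} := inferInstance
    exact Set.Finite.ofFinset (F.attach.image fun q => K q.1 q.2) (by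
      intro J
      simp only [Finset.mem_image, Finset.mem_attach, true_and, Subtype.exists,
        Set.mem_setOf_eq]
      constructor
      · rintro ⟨q, hq, rfl⟩; exact ⟨q, hq, rfl⟩
      · rintro ⟨q, hq, rfl⟩; exact ⟨q, hq, rfl⟩)
  · refine le_def.2 fun x hx => ?_
    rw [top_car] at hx
    refine mem_sSup.2 ⟨hx, F, ?_, le_top.trans hle⟩
    exact fun q hq => ⟨K q hq, ⟨q, hq, rfl⟩, hK q hq⟩

/-- the principal round ideal on `a ∈ P` -/
noncomputable def rho (a : L) (ha : a ∈ P) : RId P r hP hr where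
  car := {x | x ∈ P ∧ r x a}
  sub := fun _ hx => hx.1
  bot_mem := ⟨hP.1, r_bot (hr := hr) hP ha⟩
  down := fun x hxP y hy hxy => ⟨hxP, rmono (hr := hr) hxP ha hxy hy.2 le_rfl⟩
  supc := fun x hx y hy => ⟨hP.2.2.2.1 _ hx.1 _ hy.1, rsup (hr := hr) hx.2 hy.2⟩
  round := by
    rintro x ⟨hxP, hxa⟩
    obtain ⟨z, hzP, hxz, hza⟩ := rinterp (hr := hr) hxa
    exact ⟨z, ⟨hzP, hza⟩, hxz⟩

theorem rho_le {b : L} (hb : b ∈ P) {J : RId P r hP hr} (hbJ : b ∈ J.car) :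
    rho b hb ≤ J := fun x hx => J.down hx.1 hbJ (rle (hr := hr) hx.2)

theorem rho_wi {a b : L} (ha : a ∈ P) (hb : b ∈ P) (hab : r a b) :
    WellInside (rho (hP := hP) (hr := hr) a ha) (rho b hb) := by
  obtain ⟨c, hcP, hac, hcb⟩ := rinterp (hr := hr) hab
  obtain ⟨z, hzP, hcz, hzb⟩ := rinterp (hr := hr) hcb
  have haC : aᶜ ∈ P := hP.2.2.2.2 a ha
  -- the ideal rho aᶜ is disjoint from rho a
  have hdisj : rho (hP := hP) (hr := hr) aᶜ haC ⊓ rho a ha = ⊥ := by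
    refine eq_bot_of_forall fun x hx => ?_
    rw [inf_car] at hx
    have h1 : x ≤ aᶜ := rle (hr := hr) hx.1.2
    have h2 : x ≤ a := rle (hr := hr) hx.2.2
    exact le_bot_iff.1 (by
      calc x ≤ a ⊓ aᶜ := le_inf h2 h1
        _ = ⊥ := inf_compl_self a)
  have hcompl : rho (hP := hP) (hr := hr) aᶜ haC ≤ (rho a ha)ᶜ :=
    le_compl_iff_disjoint_right.2 (disjoint_iff.2 hdisj)
  have hsup : rho (hP := hP) (hr := hr) aᶜ haC ⊔ rho b hb = ⊤ := by
    refine eq_top_of_top_mem ?_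
    have hc1 : cᶜ ∈ (rho (hP := hP) (hr := hr) aᶜ haC).car :=
      ⟨hP.2.2.2.2 c hcP, rcompl (hr := hr) hac⟩
    have hz1 : z ∈ (rho (hP := hP) (hr := hr) b hb).car := ⟨hzP, hzb⟩
    have hmem : cᶜ ⊔ z ∈ (rho (hP := hP) (hr := hr) aᶜ haC ⊔ rho b hb).car :=
      RId.supc _ (le_def.1 le_sup_left hc1) (le_def.1 le_sup_right hz1)
    have : cᶜ ⊔ z = ⊤ := rwi (hr := hr) hcz
    rwa [this] at hmem
  refine top_unique ?_
  rw [← hsup]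
  exact sup_le_sup hcompl le_rfl

theorem regular_RId : IsRegularFrame (RId P r hP hr) := by
  intro J
  refine le_antisymm ?_ (sSup_le fun K hK => wi_le hK)
  refine le_def.2 fun x hx => ?_
  obtain ⟨b, hbJ, hxb⟩ := J.round hx
  obtain ⟨z, hzP, hxz, hzb⟩ := rinterp (hr := hr) hxb
  have hbP : b ∈ P := J.sub hbJ
  have hKwi : WellInside (rho (hP := hP) (hr := hr) z hzP) J := by
    have h1 := rho_wi (hP := hP) (hr := hr) hzP hbP hzb
    refine eq_top_iff.mpr (h1.ge.trans (sup_le_sup le_rfl (rho_le hbP hbJ)))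
  have hmem : x ∈ (rho (hP := hP) (hr := hr) z hzP).car := ⟨J.sub hx, hxz⟩
  have hsub : rho (hP := hP) (hr := hr) z hzP ≤ sSup {b | WellInside b J} :=
    le_sSup (show rho (hP := hP) (hr := hr) z hzP ∈ {b | WellInside b J} from hKwi)
  exact le_def.1 hsub hmem

end RIdSec2
end BanAux

namespace BanAux
section MuSec

variable {L : Type u} [Order.Frame L]
variable {P : Set L} {r : L → L → Prop} {hP : IsSubPcdLattice P} {hr : IsStrongInclusion P r}

set_option linter.unusedSectionVars false
set_option linter.unusedVariables false

theorem fhom_mono {α β : Type*} [Order.Frame α] [Order.Frame β] (f : FrameHom α β) :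
    Monotone f := fun a b h => by
  have e : f b = f (a ⊔ b) := by rw [sup_eq_right.2 h]
  rw [e, map_sup]; exact le_sup_left

theorem fhom_finsup {α β : Type*} [Order.Frame α] [Order.Frame β] (f : FrameHom α β)
    (F : Finset α) : f (F.sup id) = F.sup fun u => f u := by
  induction F using Finset.cons_induction with
  | empty => simpa using map_bot f
  | cons a F ha ih =>
      rw [Finset.sup_cons, Finset.sup_cons, map_sup, ih]
      rfl

/-- the canonical map from strongly regular ideals to the frame -/
noncomputable def mu : FrameHom (RId P r hP hr) L where
  toFun := fun J => sSup J.car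
  map_inf' := by
    intro J K
    show sSup (J ⊓ K).car = sSup J.car ⊓ sSup K.car
    rw [inf_car]
    refine le_antisymm (le_inf (sSup_le_sSup Set.inter_subset_left)
      (sSup_le_sSup Set.inter_subset_right)) ?_
    rw [sSup_inf_eq]
    refine iSup₂_le fun a ha => ?_
    rw [inf_sSup_eq]
    refine iSup₂_le fun b hb => ?_
    exact le_sSup ⟨J.down (hP.2.2.1 _ (J.sub ha) _ (K.sub hb)) ha inf_le_left,
      K.down (hP.2.2.1 _ (J.sub ha) _ (K.sub hb)) hb inf_le_right⟩
  map_top' := by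
    show sSup (⊤ : RId P r hP hr).car = ⊤
    rw [top_car]
    exact top_unique (le_sSup hP.2.1)
  map_sSup' := by
    intro S
    show sSup (sSup S).car = sSup ((fun J => sSup J.car) '' S)
    refine le_antisymm (sSup_le fun x hx => ?_) (sSup_le ?_)
    · obtain ⟨hxP, F, hF, hle⟩ := mem_sSup.1 hx
      refine hle.trans (Finset.sup_le fun q hq => ?_)
      obtain ⟨J, hJ, hqJ⟩ := hF q hq
      exact le_trans (le_sSup hqJ) (le_sSup ⟨J, hJ, rfl⟩)
    · rintro _ ⟨J, hJ, rfl⟩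
      exact sSup_le_sSup (le_def.1 (le_sSup hJ))

theorem mu_apply (J : RId P r hP hr) : mu (hP := hP) (hr := hr) J = sSup J.car := rfl

theorem mu_dense (J : RId P r hP hr) (h : mu (hP := hP) (hr := hr) J = ⊥) : J = ⊥ :=
  eq_bot_of_forall fun x hx => le_bot_iff.1 (h ▸ le_sSup hx)

/-- the round ideal of elements well below `a` -/
noncomputable def sigmaI (a : L) : RId P r hP hr where
  car := {p | p ∈ P ∧ ∃ q ∈ P, r p q ∧ q ≤ a}
  sub := fun _ hx => hx.1
  bot_mem := ⟨hP.1, ⊥, hP.1, hr.1.1, bot_le⟩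
  down := by
    rintro x hxP y ⟨hyP, q, hqP, hyq, hqa⟩ hxy
    exact ⟨hxP, q, hqP, rmono (hr := hr) hxP hqP hxy hyq le_rfl, hqa⟩
  supc := by
    rintro x ⟨hxP, q₁, hq₁P, hxq₁, hq₁a⟩ y ⟨hyP, q₂, hq₂P, hyq₂, hq₂a⟩
    have hq12 : q₁ ⊔ q₂ ∈ P := hP.2.2.2.1 _ hq₁P _ hq₂P
    exact ⟨hP.2.2.2.1 _ hxP _ hyP, q₁ ⊔ q₂, hq12,
      rsup (hr := hr) (rmono (hr := hr) hxP hq12 le_rfl hxq₁ le_sup_left)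
        (rmono (hr := hr) hyP hq12 le_rfl hyq₂ le_sup_right),
      sup_le hq₁a hq₂a⟩
  round := by
    rintro x ⟨hxP, q, hqP, hxq, hqa⟩
    obtain ⟨z, hzP, hxz, hzq⟩ := rinterp (hr := hr) hxq
    exact ⟨z, ⟨hzP, q, hqP, hzq, hqa⟩, hxz⟩

theorem mu_sigma (hPb : IsBasis P)
    (hcompat : ∀ a ∈ P, a = sSup {x | x ∈ P ∧ r x a}) (a : L) :
    mu (hP := hP) (hr := hr) (sigmaI a) = a := by
  rw [mu_apply]
  refine le_antisymm (sSup_le ?_) ?_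
  · rintro x ⟨hxP, q, hqP, hxq, hqa⟩
    exact (rle (hr := hr) hxq).trans hqa
  · conv_lhs => rw [hPb a]
    refine sSup_le ?_
    rintro p ⟨hpP, hpa⟩
    have : p = sSup {x | x ∈ P ∧ r x p} := hcompat p hpP
    rw [this]
    refine sSup_le ?_
    rintro x ⟨hxP, hxp⟩
    exact le_sSup ⟨hxP, p, hpP, hxp, hpa⟩

end MuSec

section LiftSec

variable {L : Type u} [Order.Frame L]
variable {P : Set L} {r : L → L → Prop} {hP : IsSubPcdLattice P} {hr : IsStrongInclusion P r}
variable {L' : Type u} [Order.Frame L']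

set_option linter.unusedSectionVars false
set_option linter.unusedVariables false

/-- carrier of the lift of `f` -/
def gC (f : FrameHom L' L) (x : L') : Set L :=
  {q | q ∈ P ∧ ∃ p ∈ P, r q p ∧ ∃ y : L', WellInside y x ∧ p ≤ f y}

/-- the lift of `f` as a map into strongly regular ideals -/
noncomputable def gI (hP : IsSubPcdLattice P) (hr : IsStrongInclusion P r)
    (f : FrameHom L' L) (x : L') : RId P r hP hr where
  car := gC (P := P) (r := r) f x
  sub := fun _ hx => hx.1
  bot_mem := ⟨hP.1, ⊥, hP.1, hr.1.1, ⊥, wi_bot x, bot_le⟩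
  down := by
    rintro q' hq'P q ⟨hqP, p, hpP, hqp, y, hy, hpf⟩ hq'q
    exact ⟨hq'P, p, hpP, rmono (hr := hr) hq'P hpP hq'q hqp le_rfl, y, hy, hpf⟩
  supc := by
    rintro q₁ ⟨hq₁P, p₁, hp₁P, hq₁p₁, y₁, hy₁, hp₁f⟩ q₂ ⟨hq₂P, p₂, hp₂P, hq₂p₂, y₂, hy₂, hp₂f⟩
    have hp12 : p₁ ⊔ p₂ ∈ P := hP.2.2.2.1 _ hp₁P _ hp₂P
    refine ⟨hP.2.2.2.1 _ hq₁P _ hq₂P, p₁ ⊔ p₂, hp12,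
      rsup (hr := hr) (rmono (hr := hr) hq₁P hp12 le_rfl hq₁p₁ le_sup_left)
        (rmono (hr := hr) hq₂P hp12 le_rfl hq₂p₂ le_sup_right),
      y₁ ⊔ y₂, wi_sup hy₁ hy₂, ?_⟩
    rw [map_sup]
    exact sup_le_sup hp₁f hp₂f
  round := by
    rintro q ⟨hqP, p, hpP, hqp, y, hy, hpf⟩
    obtain ⟨z, hzP, hqz, hzp⟩ := rinterp (hr := hr) hqp
    exact ⟨z, ⟨hzP, p, hpP, hzp, y, hy, hpf⟩, hqz⟩

theorem gI_mono {f : FrameHom L' L} {x₁ x₂ : L'} (h : x₁ ≤ x₂) :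
    gI hP hr f x₁ ≤ gI hP hr f x₂ := by
  rintro q ⟨hqP, p, hpP, hqp, y, hy, hpf⟩
  exact ⟨hqP, p, hpP, hqp, y, wi_mono le_rfl hy h, hpf⟩

theorem gI_top (f : FrameHom L' L) : gI hP hr f ⊤ = ⊤ := by
  refine top_unique (le_def.2 ?_)
  rw [top_car]
  intro q hq
  exact ⟨hq, ⊤, hP.2.1, r_top (hr := hr) hP hq, ⊤, wi_top,
    le_of_eq (map_top f).symm⟩

theorem gI_inf (f : FrameHom L' L) (x₁ x₂ : L') :
    gI hP hr f (x₁ ⊓ x₂) = gI hP hr f x₁ ⊓ gI hP hr f x₂ := by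
  refine le_antisymm (le_inf (gI_mono inf_le_left) (gI_mono inf_le_right)) (le_def.2 ?_)
  rw [inf_car]
  rintro q ⟨⟨hqP, p₁, hp₁P, hqp₁, y₁, hy₁, hp₁f⟩, ⟨-, p₂, hp₂P, hqp₂, y₂, hy₂, hp₂f⟩⟩
  refine ⟨hqP, p₁ ⊓ p₂, hP.2.2.1 _ hp₁P _ hp₂P, rinf (hr := hr) hqp₁ hqp₂,
    y₁ ⊓ y₂, wi_inf hy₁ hy₂, ?_⟩
  rw [map_inf]
  exact inf_le_inf hp₁f hp₂f

theorem gI_sSup (hc' : IsCompactFrame L') (hreg' : IsRegularFrame L') (f : FrameHom L' L)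
    (hfine : ∀ x y : L', WellInside y x →
      ∃ p ∈ P, ∃ p' ∈ P, f y ≤ p ∧ r p p' ∧ p' ≤ f x) (S : Set L') :
    gI hP hr f (sSup S) = sSup (gI hP hr f '' S) := by
  refine le_antisymm (le_def.2 fun q hq => ?_) (sSup_le ?_)
  · obtain ⟨hqP, p, hpP, hqp, y, hy, hpf⟩ := hq
    obtain ⟨F, hF, hyF⟩ := wi_sSup_split hc' hreg' hy
    have hstep : ∀ u : L', ∃ v : L,
        u ∈ F → (v ∈ P ∧ f u ≤ v ∧ ∃ x ∈ S, v ∈ (gI hP hr f x).car) := by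
      intro u
      by_cases hu : u ∈ F
      · obtain ⟨x, hxS, hux⟩ := hF u hu
        obtain ⟨z, huz, hzx⟩ := wi_interp hc' hreg' hux
        obtain ⟨p₁, hp₁P, p₂, hp₂P, hfu, hp₁₂, hp₂f⟩ := hfine z u huz
        exact ⟨p₁, fun _ => ⟨hp₁P, hfu, x, hxS, ⟨hp₁P, p₂, hp₂P, hp₁₂, z, hzx, hp₂f⟩⟩⟩
      · exact ⟨⊥, fun h => absurd h hu⟩
    choose c hc using hstep
    classical
    refine mem_sSup.2 ⟨hqP, F.image c, ?_, ?_⟩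
    · intro v hv
      obtain ⟨u, hu, rfl⟩ := Finset.mem_image.1 hv
      obtain ⟨-, -, x, hxS, hvx⟩ := hc u hu
      exact ⟨gI hP hr f x, ⟨x, hxS, rfl⟩, hvx⟩
    · have h1 : q ≤ f y := (rle (hr := hr) hqp).trans hpf
      have h2 : f y ≤ f (F.sup id) := fhom_mono f hyF
      have h3 : f (F.sup id) = F.sup fun u => f u := fhom_finsup f F
      have h4 : (F.sup fun u => f u) ≤ (F.image c).sup id := by
        refine Finset.sup_le fun u hu => ?_
        exact le_trans (hc u hu).2.1 (Finset.le_sup (f := id) (Finset.mem_image_of_mem c hu))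
      exact h1.trans (h2.trans ((le_of_eq h3).trans h4))
  · rintro _ ⟨x, hx, rfl⟩
    exact gI_mono (le_sSup hx)

end LiftSec
end BanAux

namespace BanAux

set_option linter.unusedSectionVars false
set_option linter.unusedVariables false

theorem unique_lift {L : Type u} [Order.Frame L] {M' : Type u} [Order.Frame M']
    {μ : FrameHom M' L} (hdense : ∀ a : M', μ a = ⊥ → a = ⊥)
    {L' : Type u} [Order.Frame L'] (hreg' : IsRegularFrame L')
    (f : FrameHom L' L) (g₁ g₂ : FrameHom L' M')
    (h₁ : f = μ.comp g₁) (h₂ : f = μ.comp g₂) : g₁ = g₂ := by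
  have key : ∀ g g' : FrameHom L' M', f = μ.comp g → f = μ.comp g' →
      ∀ y x : L', WellInside y x → g y ≤ g' x := by
    intro g g' hg hg' y x hyx
    have hgy : μ (g y) = f y := (DFunLike.congr_fun hg y).symm
    have hgy' : μ (g' yᶜ) = f yᶜ := (DFunLike.congr_fun hg' yᶜ).symm
    have e1 : μ (g y ⊓ g' yᶜ) = ⊥ := by
      rw [map_inf, hgy, hgy', ← map_inf, inf_compl_self, map_bot]
    have e2 : g y ⊓ g' yᶜ = ⊥ := hdense _ e1
    have e3 : g' yᶜ ⊔ g' x = ⊤ := by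
      rw [← map_sup, show yᶜ ⊔ x = ⊤ from hyx, map_top]
    calc g y = g y ⊓ (g' yᶜ ⊔ g' x) := by rw [e3, inf_top_eq]
      _ = (g y ⊓ g' yᶜ) ⊔ (g y ⊓ g' x) := inf_sup_left _ _ _
      _ ≤ g' x := by rw [e2]; simp
  have main : ∀ (g g' : FrameHom L' M'), f = μ.comp g → f = μ.comp g' →
      ∀ x, g x ≤ g' x := by
    intro g g' hg hg' x
    have e : g x = sSup (g '' {y | WellInside y x}) := by
      conv_lhs => rw [hreg' x]
      exact map_sSup g _
    rw [e]
    refine sSup_le ?_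
    rintro _ ⟨y, hy, rfl⟩
    exact key g g' hg hg' y x hy
  exact DFunLike.ext _ _ fun x =>
    le_antisymm (main g₁ g₂ h₁ h₂ x) (main g₂ g₁ h₂ h₁ x)

theorem mu_gI {L : Type u} [Order.Frame L] {P : Set L} {r : L → L → Prop}
    {hP : IsSubPcdLattice P} {hr : IsStrongInclusion P r}
    {L' : Type u} [Order.Frame L'] (hc' : IsCompactFrame L') (hreg' : IsRegularFrame L')
    (f : FrameHom L' L)
    (hfine : ∀ x y : L', WellInside y x →
      ∃ p ∈ P, ∃ p' ∈ P, f y ≤ p ∧ r p p' ∧ p' ≤ f x) (x : L') :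
    mu (hP := hP) (hr := hr) (gI hP hr f x) = f x := by
  rw [mu_apply]
  refine le_antisymm (sSup_le ?_) ?_
  · rintro q ⟨hqP, p, hpP, hqp, y, hy, hpf⟩
    exact (rle (hr := hr) hqp).trans (hpf.trans (fhom_mono f (wi_le hy)))
  · have e : f x = sSup (f '' {y | WellInside y x}) := by
      conv_lhs => rw [hreg' x]
      exact map_sSup f _
    rw [e]
    refine sSup_le ?_
    rintro _ ⟨y, hy, rfl⟩
    obtain ⟨z, hyz, hzx⟩ := wi_interp hc' hreg' hy
    obtain ⟨p₁, hp₁P, p₂, hp₂P, hfy, hp₁₂, hp₂f⟩ := hfine z y hyz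
    exact le_trans hfy (le_sSup ⟨hp₁P, p₂, hp₂P, hp₁₂, z, hzx, hp₂f⟩)

end BanAux


/-- Theorem: a compatible strong inclusion on a sub-pcd-lattice `P` that is a
basis of `L` yields a compactification of `L` with the extension property for
maps from compact regular frames for which the strong inclusion is finer. -/
theorem compactification_of_strongInclusion
    {L : Type u} [Order.Frame L]
    (P : Set L) (hP : IsSubPcdLattice P) (hPb : IsBasis P)
    (r : L → L → Prop) (hr : IsStrongInclusion P r)
    (hcompat : ∀ a ∈ P, a = sSup {x | x ∈ P ∧ r x a}) :
    ∃ (M : Type u) (_ : Order.Frame M), IsCompactFrame M ∧ IsRegularFrame M ∧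
      ∃ μ : FrameHom M L,
        (∀ a : M, μ a = ⊥ → a = ⊥) ∧ Function.Surjective μ ∧
        ∀ (L' : Type u) (_ : Order.Frame L'),
          IsCompactFrame L' → IsRegularFrame L' →
          ∀ f : FrameHom L' L,
            (∀ x y : L', WellInside y x →
              ∃ p ∈ P, ∃ p' ∈ P, f y ≤ p ∧ r p p' ∧ p' ≤ f x) →
            ∃! g : FrameHom L' M, f = μ.comp g := by
  classical
  refine ⟨BanAux.RId P r hP hr, inferInstance, BanAux.compact_RId, BanAux.regular_RId,
    BanAux.mu, BanAux.mu_dense, ?_, ?_⟩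
  · exact fun a => ⟨BanAux.sigmaI a, BanAux.mu_sigma hPb hcompat a⟩
  · intro L' _ hc' hreg' f hfine
    refine ⟨{ toFun := BanAux.gI hP hr f
              map_inf' := fun x₁ x₂ => BanAux.gI_inf f x₁ x₂
              map_top' := BanAux.gI_top f
              map_sSup' := fun S => BanAux.gI_sSup hc' hreg' f hfine S }, ?_, ?_⟩
    · exact DFunLike.ext _ _ fun x => (BanAux.mu_gI hc' hreg' f hfine x).symm
    · intro g' hg'
      exact BanAux.unique_lift BanAux.mu_dense hreg' f g' _ hg'
        (DFunLike.ext _ _ fun x => (BanAux.mu_gI hc' hreg' f hfine x).symm)
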